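/- For an integer k with 1 ≤ k ≤ n and the admissible cone Γ_k = {λ ∈ ℝ^n : σ_i(λ) > 0 for all 0 ≤ i ≤ k}, the k-th elementary symmetric function σ_k is strictly increasing on Γ_k: for any λ ∈ Γ_k and any μ ∈ ℝ^n with μ_i ≥ λ_i for all i and μ ≠ λ, we have σ_k(μ) > σ_k(λ). -/

import Mathlib

namespace SigmaAux

open Multiset Polynomial

lemma esymm_zero' (s : Multiset ℝ) : s.esymm 0 = 1 := by
  simp [Multiset.esymm, Multiset.powersetCard_zero_left]

lemma esymm_one' (s : Multiset ℝ) : s.esymm 1 = s.sum := by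
  simp [Multiset.esymm, Multiset.powersetCard_one, Multiset.map_map]

lemma esymm_cons (a : ℝ) (s : Multiset ℝ) (k : ℕ) :
    (a ::ₘ s).esymm (k + 1) = s.esymm (k + 1) + a * s.esymm k := by
  rw [Multiset.esymm, Multiset.powersetCard_cons, Multiset.map_add, Multiset.sum_add,
    Multiset.map_map]
  congr 1
  rw [Multiset.esymm, ← Multiset.sum_map_mul_left]
  congr 1
  apply Multiset.map_congr rfl
  intro t _
  simp [Multiset.prod_cons]

lemma esymm_eq_zero (s : Multiset ℝ) (k : ℕ) (h : Multiset.card s < k) : s.esymm k = 0 := by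
  rw [Multiset.esymm, Multiset.powersetCard_eq_empty _ h]
  simp

lemma esymm_card (s : Multiset ℝ) : s.esymm (Multiset.card s) = s.prod := by
  induction s using Multiset.induction with
  | empty => simp [esymm_zero']
  | cons a s ih =>
      rw [Multiset.card_cons, esymm_cons, esymm_eq_zero s _ (by omega), ih, Multiset.prod_cons]
      ring


lemma sum_sq_le (s : Multiset ℝ) :
    s.sum ^ 2 ≤ (Multiset.card s : ℝ) * (s.map (· ^ 2)).sum := by
  induction s using Multiset.induction with
  | empty => simp
  | cons a s ih =>
      have hT : (0:ℝ) ≤ (s.map (· ^ 2)).sum :=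
        Multiset.sum_nonneg (by intro x hx; obtain ⟨y, _, rfl⟩ := Multiset.mem_map.1 hx
                                positivity)
      have hc : (0:ℝ) ≤ (Multiset.card s : ℝ) := by positivity
      rw [Multiset.sum_cons, Multiset.card_cons, Multiset.map_cons, Multiset.sum_cons]
      push_cast
      rcases Nat.eq_zero_or_pos (Multiset.card s) with h0 | h0
      · obtain rfl : s = 0 := Multiset.card_eq_zero.1 h0
        simp
      · have hc1 : (1:ℝ) ≤ (Multiset.card s : ℝ) := by exact_mod_cast h0
        have key : (Multiset.card s : ℝ) * ((a + s.sum) ^ 2) ≤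
            (Multiset.card s : ℝ) * (((Multiset.card s : ℝ) + 1) *
              (a ^ 2 + (s.map (· ^ 2)).sum)) := by
          nlinarith [sq_nonneg ((Multiset.card s : ℝ) * a - s.sum),
            mul_le_mul_of_nonneg_left ih hc, ih, hT, hc]
        exact le_of_mul_le_mul_left key (by linarith)

lemma esymm_one_sq (s : Multiset ℝ) :
    s.esymm 1 ^ 2 = (s.map (· ^ 2)).sum + 2 * s.esymm 2 := by
  induction s using Multiset.induction with
  | empty => simp [esymm_zero', Multiset.esymm, Multiset.powersetCard_zero_right]
  | cons a s ih =>
      have h1 : (a ::ₘ s).esymm 1 = s.esymm 1 + a * s.esymm 0 := esymm_cons a s 0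
      have h2 : (a ::ₘ s).esymm 2 = s.esymm 2 + a * s.esymm 1 := esymm_cons a s 1
      rw [h1, h2, esymm_zero', Multiset.map_cons, Multiset.sum_cons]
      rw [esymm_one'] at *
      nlinarith [ih]

lemma two_card_esymm_two (s : Multiset ℝ) :
    2 * (Multiset.card s : ℝ) * s.esymm 2 ≤ ((Multiset.card s : ℝ) - 1) * s.esymm 1 ^ 2 := by
  have h1 := esymm_one_sq s
  have h2 := sum_sq_le s
  rw [esymm_one'] at *
  nlinarith

/-- inversion identity: σ_t(1/x) * ∏x = σ_{card - t}(x) for all entries nonzero. -/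
lemma esymm_inv (s : Multiset ℝ) (h0 : ∀ x ∈ s, x ≠ 0) :
    ∀ t : ℕ, t ≤ Multiset.card s →
      (s.map (·⁻¹)).esymm t * s.prod = s.esymm (Multiset.card s - t) := by
  induction s using Multiset.induction with
  | empty =>
      intro t ht
      obtain rfl := Nat.le_zero.1 (by simpa using ht)
      simp [esymm_zero']
  | cons a s ih =>
      intro t ht
      have ha : a ≠ 0 := h0 a (Multiset.mem_cons_self a s)
      have h0' : ∀ x ∈ s, x ≠ 0 := fun x hx => h0 x (Multiset.mem_cons_of_mem hx)
      rcases Nat.eq_zero_or_pos t with rfl | htpos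
      · simp only [esymm_zero', one_mul, Nat.sub_zero]
        rw [esymm_card]
      obtain ⟨u, rfl⟩ : ∃ u, t = u + 1 := ⟨t - 1, by omega⟩
      rw [Multiset.map_cons, esymm_cons, Multiset.prod_cons, Multiset.card_cons]
      rcases Nat.lt_or_ge (Multiset.card s) (u + 1) with hlt | hle
      · -- u = card s
        have hu : u = Multiset.card s := by
          rw [Multiset.card_cons] at ht; omega
        subst hu
        have hz : (s.map (·⁻¹)).esymm (Multiset.card s + 1) = 0 :=
          esymm_eq_zero _ _ (by rw [Multiset.card_map]; omega)
        have hinv := ih h0' (Multiset.card s) le_rfl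
        rw [Nat.sub_self, esymm_zero'] at hinv
        have h2 : Multiset.card s + 1 - (Multiset.card s + 1) = 0 := by omega
        rw [hz, h2, esymm_zero']
        calc (0 + a⁻¹ * (s.map (·⁻¹)).esymm (Multiset.card s)) * (a * s.prod)
            = (a⁻¹ * a) * ((s.map (·⁻¹)).esymm (Multiset.card s) * s.prod) := by ring
          _ = 1 := by rw [inv_mul_cancel₀ ha, hinv, one_mul]
      · -- u + 1 ≤ card s
        have key1 := ih h0' (u + 1) hle
        have key2 := ih h0' u (by omega)
        have hsplit : Multiset.card s - u = (Multiset.card s - (u + 1)) + 1 := by omega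
        have hsplit2 : Multiset.card s + 1 - (u + 1) = (Multiset.card s - (u + 1)) + 1 := by
          omega
        rw [hsplit] at key2
        rw [hsplit2, esymm_cons]
        calc ((s.map (·⁻¹)).esymm (u + 1) + a⁻¹ * (s.map (·⁻¹)).esymm u) * (a * s.prod)
            = a * ((s.map (·⁻¹)).esymm (u + 1) * s.prod)
              + (a⁻¹ * a) * ((s.map (·⁻¹)).esymm u * s.prod) := by ring
          _ = _ := by rw [inv_mul_cancel₀ ha, key1, key2]; ring


lemma top_newton (r : Multiset ℝ) (h2 : 2 ≤ Multiset.card r) :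
    2 * (Multiset.card r : ℝ) * (r.esymm (Multiset.card r) * r.esymm (Multiset.card r - 2)) ≤
      ((Multiset.card r : ℝ) - 1) * r.esymm (Multiset.card r - 1) ^ 2 := by
  by_cases h0 : ∀ x ∈ r, x ≠ 0
  · have e0 := esymm_inv r h0 0 (by omega)
    have e1 := esymm_inv r h0 1 (by omega)
    have e2 := esymm_inv r h0 2 (by omega)
    rw [esymm_zero', one_mul, Nat.sub_zero] at e0
    have hq := two_card_esymm_two (r.map (·⁻¹))
    rw [Multiset.card_map] at hq
    have step := mul_le_mul_of_nonneg_right hq (sq_nonneg r.prod)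
    rw [← e0, ← e1, ← e2]
    nlinarith [step]
  · push_neg at h0
    obtain ⟨x, hx, hx0⟩ := h0
    have hprod : r.prod = 0 := Multiset.prod_eq_zero (hx0 ▸ hx)
    rw [esymm_card, hprod]
    have hc : (2:ℝ) ≤ (Multiset.card r : ℝ) := by exact_mod_cast h2
    nlinarith [sq_nonneg (r.esymm (Multiset.card r - 1))]

lemma real_rooted_iterate (p : ℝ[X]) (h : Multiset.card p.roots = p.natDegree) :
    ∀ d : ℕ, d ≤ p.natDegree →
      (derivative^[d] p).natDegree = p.natDegree - d ∧
      Multiset.card (derivative^[d] p).roots = p.natDegree - d := by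
  intro d
  induction d with
  | zero => intro _; simpa using h
  | succ d ih =>
      intro hd
      obtain ⟨hdeg, hroots⟩ := ih (by omega)
      have hq1 : 1 ≤ (derivative^[d] p).natDegree := by omega
      have hq'ne : derivative (derivative^[d] p) ≠ 0 := by
        intro h0
        have := natDegree_eq_zero_of_derivative_eq_zero h0
        omega
      have hcard_le := Polynomial.card_roots_le_derivative (derivative^[d] p)
      have hdeg' : (derivative (derivative^[d] p)).natDegree < (derivative^[d] p).natDegree :=
        natDegree_derivative_lt (by omega)
      have hcard' := Polynomial.card_roots' (derivative (derivative^[d] p))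
      rw [Function.iterate_succ_apply']
      constructor <;> omega

lemma desc_f1 : ∀ d : ℕ, (d+1).descFactorial d = (d+1) * d.factorial := by
  intro d
  induction d with
  | zero => simp
  | succ d ih => rw [Nat.succ_descFactorial_succ, ih, Nat.factorial_succ]

lemma desc_f2 : ∀ d : ℕ, 2 * ((d+2).descFactorial d) = (d+2) * (d+1) * d.factorial := by
  intro d
  induction d with
  | zero => simp
  | succ d ih =>
      have h : d + 1 + 2 = (d + 2) + 1 := by omega
      rw [h, Nat.succ_descFactorial_succ, Nat.factorial_succ]
      calc 2 * ((d + 2 + 1) * (d + 2).descFactorial d)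
          = (d + 2 + 1) * (2 * ((d + 2).descFactorial d)) := by ring
        _ = (d + 2 + 1) * ((d + 2) * (d + 1) * d.factorial) := by rw [ih]
        _ = (d + 2 + 1) * (d + 1 + 1) * ((d + 1) * d.factorial) := by ring


lemma final_arith (Dd Jj F A0 A1 A2 D0 D1 D2 : ℝ)
    (hF : 0 < F) (hDd : 0 ≤ Dd) (hJj : 0 ≤ Jj)
    (hf0 : D0 = F) (hf1 : D1 = (Dd + 1) * F) (hf2 : 2 * D2 = (Dd + 2) * ((Dd + 1) * F))
    (key : 2 * (Jj + 2) * ((D0 * A2) * (D2 * A0)) ≤ (Jj + 2 - 1) * (D1 * A1) ^ 2) :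
    A0 * A2 ≤ A1 ^ 2 := by
  rw [hf0] at key
  rw [hf1] at key
  have hD2 : D2 = (Dd + 2) * ((Dd + 1) * F) / 2 := by linarith
  rw [hD2] at key
  have key' : ((Jj + 2) * ((Dd + 2) * (Dd + 1)) * F ^ 2) * (A0 * A2) ≤
      (Jj + 1) * (Dd + 1) ^ 2 * F ^ 2 * A1 ^ 2 := by nlinarith [key]
  have bonus : (0:ℝ) ≤ (F * A1) ^ 2 * ((Dd + 1) * (Jj + Dd + 3)) := by positivity
  have hc : (0:ℝ) < (Jj + 2) * ((Dd + 2) * (Dd + 1)) * F ^ 2 := by positivity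
  have step2 : ((Jj + 2) * ((Dd + 2) * (Dd + 1)) * F ^ 2) * (A0 * A2) ≤
      ((Jj + 2) * ((Dd + 2) * (Dd + 1)) * F ^ 2) * A1 ^ 2 := by nlinarith [key', bonus]
  exact le_of_mul_le_mul_left step2 hc

lemma newton_weak (s : Multiset ℝ) (j : ℕ) (hj : j + 2 ≤ Multiset.card s) :
    s.esymm j * s.esymm (j + 2) ≤ s.esymm (j + 1) ^ 2 := by
  set n := Multiset.card s with hn
  set d := n - (j + 2) with hd
  set p : ℝ[X] := (s.map fun r => X + C r).prod with hp
  have hpform : p = ((s.map fun r => -r).map fun a => X - C a).prod := by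
    rw [hp, Multiset.map_map]
    congr 1
    apply Multiset.map_congr rfl
    intro x _
    simp [sub_neg_eq_add]
  have hproots : p.roots = s.map fun r => -r := by
    rw [hpform, roots_multiset_prod_X_sub_C]
  have hpdeg : p.natDegree = n := by
    rw [hpform, natDegree_multiset_prod_X_sub_C_eq_card, Multiset.card_map]
  have hprc : Multiset.card p.roots = p.natDegree := by
    rw [hproots, Multiset.card_map, hpdeg]
  obtain ⟨hqdeg, hqroots⟩ := real_rooted_iterate p hprc d (by omega)
  rw [hpdeg] at hqdeg hqroots
  have he : n - d = j + 2 := by omega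
  rw [he] at hqdeg hqroots
  set q := derivative^[d] p with hq
  have hsplits : q.Splits :=
    (splits_iff_card_roots).2 (by rw [hqroots, hqdeg])
  have hqeq : q = C q.leadingCoeff * (q.roots.map fun a => X - C a).prod :=
    (C_leadingCoeff_mul_prod_multiset_X_sub_C (splits_iff_card_roots.1 hsplits)).symm
  have hcq : ∀ t : ℕ, t ≤ 2 → q.coeff t =
      ((t + d).descFactorial d : ℝ) * s.esymm (j + 2 - t) := by
    intro t ht
    rw [hq, coeff_iterate_derivative, nsmul_eq_mul]
    congr 1
    have h1 : t + d ≤ n := by omega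
    have h2 := Multiset.prod_X_add_C_coeff s (k := t + d) (by omega)
    rw [← hp, ← hn] at h2
    rw [h2]
    congr 1
    omega
  have hcr : ∀ t : ℕ, t ≤ 2 → q.coeff t =
      q.leadingCoeff * ((-1) ^ (j + 2 - t) * q.roots.esymm (j + 2 - t)) := by
    intro t ht
    conv_lhs => rw [hqeq]
    rw [coeff_C_mul, Multiset.prod_X_sub_C_coeff q.roots (by rw [hqroots]; omega), hqroots]
  -- abbreviations
  set lc := q.leadingCoeff with hlc
  set A0 := s.esymm j with hA0
  set A1 := s.esymm (j+1) with hA1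
  set A2 := s.esymm (j+2) with hA2
  set B0 := q.roots.esymm (j + 2) with hB0
  set B1 := q.roots.esymm (j + 1) with hB1
  set B2 := q.roots.esymm j with hB2
  have c0 : ((d.descFactorial d : ℕ) : ℝ) * A2 = lc * ((-1) ^ (j + 2) * B0) := by
    have h1 := hcq 0 (by norm_num)
    have h2 := hcr 0 (by norm_num)
    simp only [Nat.zero_add, Nat.sub_zero] at h1 h2
    rw [← h1, h2]
  have c1 : (((1 + d).descFactorial d : ℕ) : ℝ) * A1 = lc * ((-1) ^ (j + 1) * B1) := by
    have h1 := hcq 1 (by norm_num)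
    have h2 := hcr 1 (by norm_num)
    have h3 : j + 2 - 1 = j + 1 := by omega
    rw [h3] at h1 h2
    rw [← h1, h2]
  have c2 : (((2 + d).descFactorial d : ℕ) : ℝ) * A0 = lc * ((-1) ^ j * B2) := by
    have h1 := hcq 2 (by norm_num)
    have h2 := hcr 2 (by norm_num)
    have h3 : j + 2 - 2 = j := by omega
    rw [h3] at h1 h2
    rw [← h1, h2]
  -- top newton for q.roots
  have htop := top_newton q.roots (by rw [hqroots]; omega)
  rw [hqroots] at htop
  have h32 : j + 2 - 2 = j := by omega
  have h31 : j + 2 - 1 = j + 1 := by omega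
  rw [h32, h31, ← hB0, ← hB1, ← hB2] at htop
  set E : ℝ := ((j:ℝ) + 2) with hE
  have hEcast : ((j + 2 : ℕ) : ℝ) = E := by push_cast [hE]; ring
  rw [hEcast] at htop
  -- htop : 2 * E * (B0 * B2) ≤ (E - 1) * B1 ^ 2
  have step := mul_le_mul_of_nonneg_left htop (sq_nonneg lc)
  have hee : ((-1:ℝ) ^ (j + 2)) * ((-1:ℝ) ^ j) = 1 := by
    rw [← pow_add]
    have h4 : j + 2 + j = 2 * (j + 1) := by ring
    rw [h4, pow_mul]
    norm_num
  have hsq1 : ((-1:ℝ) ^ (j + 1)) ^ 2 = 1 := by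
    rw [← pow_mul, mul_comm, pow_mul]
    norm_num
  -- key inequality in terms of A's and descFactorials
  set D0 : ℝ := ((d.descFactorial d : ℕ) : ℝ) with hD0
  set D1 : ℝ := (((1 + d).descFactorial d : ℕ) : ℝ) with hD1
  set D2 : ℝ := (((2 + d).descFactorial d : ℕ) : ℝ) with hD2
  have key : 2 * E * ((D0 * A2) * (D2 * A0)) ≤ (E - 1) * (D1 * A1) ^ 2 := by
    have e1 : 2 * E * ((D0 * A2) * (D2 * A0)) = lc ^ 2 * (2 * E * (B0 * B2)) := by
      rw [c0, c2]
      linear_combination (2 * E * lc ^ 2 * B0 * B2) * hee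
    have e2 : (E - 1) * (D1 * A1) ^ 2 = lc ^ 2 * ((E - 1) * B1 ^ 2) := by
      rw [c1]
      linear_combination ((E - 1) * lc ^ 2 * B1 ^ 2) * hsq1
    rw [e1, e2]
    exact step
  rw [hE] at key
  have hf1n := congrArg (fun x : ℕ => (x : ℝ)) (desc_f1 d)
  have hf2n := congrArg (fun x : ℕ => (x : ℝ)) (desc_f2 d)
  push_cast at hf1n hf2n
  have hFpos : (0:ℝ) < (d.factorial : ℝ) := by exact_mod_cast d.factorial_pos
  refine final_arith (d:ℝ) (j:ℝ) (d.factorial : ℝ) A0 A1 A2 D0 D1 D2 hFpos (by positivity)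
    (by positivity) ?_ ?_ ?_ key
  · rw [hD0, Nat.descFactorial_self]
  · rw [hD1, Nat.add_comm 1 d]; linarith [hf1n]
  · rw [hD2, Nat.add_comm 2 d]; linarith [hf2n]


lemma restrict : ∀ k : ℕ, 1 ≤ k → ∀ (s : Multiset ℝ) (a : ℝ), k ≤ Multiset.card s + 1 →
    (∀ j, j ≤ k → 0 < (a ::ₘ s).esymm j) → ∀ j, j < k → 0 < s.esymm j := by
  intro k
  induction k with
  | zero => omega
  | succ k ih =>
      intro _ s a hcard h j hj
      rcases Nat.eq_zero_or_pos k with rfl | hk1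
      · interval_cases j
        rw [esymm_zero']; norm_num
      have ihs : ∀ j, j < k → 0 < s.esymm j :=
        ih hk1 s a (by omega) (fun j hj => h j (by omega))
      rcases Nat.lt_or_ge j k with hjk | hjk
      · exact ihs j hjk
      have hjeq : j = k := by omega
      subst hjeq
      obtain ⟨kk, rfl⟩ : ∃ kk, j = kk + 1 := ⟨j - 1, by omega⟩
      have hAkk : 0 < s.esymm kk := ihs kk (by omega)
      have h1 : 0 < s.esymm (kk + 1) + a * s.esymm kk := by
        have := h (kk + 1) (by omega); rwa [esymm_cons] at this
      have h2 : 0 < s.esymm (kk + 2) + a * s.esymm (kk + 1) := by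
        have := h (kk + 2) (by omega); rwa [esymm_cons] at this
      rcases le_or_gt a 0 with ha | ha
      · nlinarith [h1, hAkk]
      by_contra hne
      push_neg at hne
      rcases Nat.lt_or_ge (Multiset.card s) (kk + 2) with hc | hc
      · rw [esymm_eq_zero s _ hc] at h2
        nlinarith
      · have hN := newton_weak s kk hc
        nlinarith [hN, h1, h2, hAkk, ha, hne]


end SigmaAux

/-- The k-th elementary symmetric function on ℝ^n. -/
noncomputable def esymm (n k : ℕ) (l : Fin n → ℝ) : ℝ :=
  ∑ s ∈ Finset.powersetCard k (Finset.univ : Finset (Fin n)), ∏ i ∈ s, l i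

namespace SigmaAux

lemma esymm_eq_multiset (n k : ℕ) (l : Fin n → ℝ) :
    esymm n k l = ((Finset.univ.val : Multiset (Fin n)).map l).esymm k := by
  rw [Finset.esymm_map_val]
  rfl

lemma cons_decomp (n : ℕ) (v : Fin n → ℝ) (a : Fin n) :
    (Finset.univ.val : Multiset (Fin n)).map v =
      v a ::ₘ ((Finset.univ.erase a).val.map v) := by
  rw [Finset.erase_val]
  conv_lhs => rw [← Multiset.cons_erase (show a ∈ (Finset.univ.val : Multiset (Fin n)) by simp)]
  rw [Multiset.map_cons]

lemma step (n k : ℕ) (hk1 : 1 ≤ k) (hkn : k ≤ n) (v : Fin n → ℝ) (a : Fin n) (c : ℝ)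
    (hvc : v a ≤ c) (hv : ∀ j, j ≤ k → 0 < esymm n j v) :
    (∀ j, j ≤ k → 0 < esymm n j (Function.update v a c)) ∧
      esymm n k v ≤ esymm n k (Function.update v a c) ∧
      (v a < c → esymm n k v < esymm n k (Function.update v a c)) := by
  classical
  set μ : Multiset ℝ := (Finset.univ.erase a).val.map v with hμ
  have hcard : Multiset.card μ = n - 1 := by
    rw [hμ, Multiset.card_map, ← Finset.card_def, Finset.card_erase_of_mem (Finset.mem_univ a),
      Finset.card_univ, Fintype.card_fin]
  have hcons : (Finset.univ.val : Multiset (Fin n)).map v = v a ::ₘ μ := cons_decomp n v a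
  have hcons' : (Finset.univ.val : Multiset (Fin n)).map (Function.update v a c) = c ::ₘ μ := by
    rw [cons_decomp n (Function.update v a c) a, Function.update_self]
    congr 1
    rw [hμ]
    apply Multiset.map_congr rfl
    intro x hx
    exact Function.update_of_ne (Finset.ne_of_mem_erase (s := Finset.univ) hx) _ _
  have hres : ∀ j, j < k → 0 < μ.esymm j := by
    refine restrict k hk1 μ (v a) (by omega) ?_
    intro j hj
    have := hv j hj
    rwa [esymm_eq_multiset, hcons] at this
  have hvall : ∀ j, j ≤ k → esymm n j v = μ.esymm j + (if j = 0 then 0 else v a * μ.esymm (j-1)) := by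
    intro j hj
    rw [esymm_eq_multiset, hcons]
    rcases Nat.eq_zero_or_pos j with rfl | hjpos
    · simp [esymm_zero']
    obtain ⟨jj, rfl⟩ : ∃ jj, j = jj + 1 := ⟨j - 1, by omega⟩
    rw [esymm_cons]
    simp
  have hwall : ∀ j, j ≤ k → esymm n j (Function.update v a c) =
      μ.esymm j + (if j = 0 then 0 else c * μ.esymm (j-1)) := by
    intro j hj
    rw [esymm_eq_multiset, hcons']
    rcases Nat.eq_zero_or_pos j with rfl | hjpos
    · simp [esymm_zero']
    obtain ⟨jj, rfl⟩ : ∃ jj, j = jj + 1 := ⟨j - 1, by omega⟩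
    rw [esymm_cons]
    simp
  refine ⟨?_, ?_, ?_⟩
  · intro j hj
    rw [hwall j hj]
    rcases Nat.eq_zero_or_pos j with rfl | hjpos
    · rw [esymm_zero']; norm_num
    have hold := hv j hj
    rw [hvall j hj] at hold
    have hpos := hres (j - 1) (by omega)
    have hne0 : ¬ (j = 0) := by omega
    rw [if_neg hne0] at hold ⊢
    nlinarith [hold, hpos, hvc]
  · rw [hvall k (le_refl k), hwall k (le_refl k)]
    have hpos := hres (k - 1) (by omega)
    have hne0 : ¬ (k = 0) := by omega
    rw [if_neg hne0, if_neg hne0]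
    nlinarith [hpos, hvc]
  · intro hlt
    rw [hvall k (le_refl k), hwall k (le_refl k)]
    have hpos := hres (k - 1) (by omega)
    have hne0 : ¬ (k = 0) := by omega
    rw [if_neg hne0, if_neg hne0]
    nlinarith [hpos, hlt]

end SigmaAux

/-- σ_k is strictly increasing on the admissible cone Γ_k. -/
theorem esymm_strict_mono_on_cone (n k : ℕ) (hk1 : 1 ≤ k) (hkn : k ≤ n)
    (l m : Fin n → ℝ) (hl : ∀ i ≤ k, 0 < esymm n i l)
    (hm : ∀ i, l i ≤ m i) (hne : m ≠ l) :
    esymm n k l < esymm n k m := by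
  classical
  set g : Finset (Fin n) → (Fin n → ℝ) := fun s i => if i ∈ s then m i else l i with hg
  have main : ∀ s : Finset (Fin n),
      (∀ j, j ≤ k → 0 < esymm n j (g s)) ∧
        esymm n k l ≤ esymm n k (g s) ∧
        ((∃ i ∈ s, l i < m i) → esymm n k l < esymm n k (g s)) := by
    intro s
    induction s using Finset.induction_on with
    | empty =>
        have hgl : g ∅ = l := by
          funext i; simp [hg]
        rw [hgl]
        exact ⟨hl, le_refl _, by rintro ⟨i, hi, _⟩; exact absurd hi (Finset.notMem_empty i)⟩
    | @insert a s ha ih =>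
        obtain ⟨ih1, ih2, ih3⟩ := ih
        have hupd : g (insert a s) = Function.update (g s) a (m a) := by
          funext i
          rcases eq_or_ne i a with rfl | hi
          · simp [hg, Function.update_self]
          · simp [hg, Function.update_of_ne hi, Finset.mem_insert, hi]
        have hga : g s a = l a := by simp [hg, ha]
        have hstep := SigmaAux.step n k hk1 hkn (g s) a (m a) (by rw [hga]; exact hm a) ih1
        rw [← hupd] at hstep
        obtain ⟨s1, s2, s3⟩ := hstep
        refine ⟨s1, le_trans ih2 s2, ?_⟩
        rintro ⟨i, hi, hlm⟩
        rcases Finset.mem_insert.1 hi with rfl | his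
        · exact lt_of_le_of_lt ih2 (s3 (by rw [hga]; exact hlm))
        · exact lt_of_lt_of_le (ih3 ⟨i, his, hlm⟩) s2
  obtain ⟨_, _, h3⟩ := main Finset.univ
  have hguniv : g Finset.univ = m := by funext i; simp [hg]
  rw [hguniv] at h3
  apply h3
  have : ∃ i, m i ≠ l i := by
    by_contra hc
    push_neg at hc
    exact hne (funext hc)
  obtain ⟨i, hi⟩ := this
  exact ⟨i, Finset.mem_univ i, lt_of_le_of_ne (hm i) (Ne.symm hi)⟩
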